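/- Let X be a graph with real weights, K = {a,b}. If X is properly decomposable with respect to K (the adjacency algebra contains a block-diagonal matrix diag(H, H') whose 2×2 block H on rows/columns a,b is non-diagonal), then the 2×2 principal submatrices Ẽ_r of the principal idempotents (on rows and columns a, b) pairwise commute. -/

import Mathlib

open Matrix

lemma commute_aeval_aux {R A : Type*} [CommSemiring R] [Semiring A] [Algebra R A]
    (x y : A) (h : Commute y x) (p : Polynomial R) :
    Commute y (Polynomial.aeval x p) := by
  induction p using Polynomial.induction_on' with
  | add p q hp hq => simpa [map_add] using hp.add_right hq
  | monomial n c =>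
      rw [Polynomial.aeval_monomial]
      have h1 : Commute y ((algebraMap R A) c) := (Algebra.commutes c y).symm
      exact h1.mul_right (h.pow_right n)

lemma comm2_aux (er fr gr es fs gs : ℝ) (h : (er - gr) * fs = (es - gs) * fr) :
    !![er, fr; fr, gr] * !![es, fs; fs, gs] = !![es, fs; fs, gs] * !![er, fr; fr, gr] := by
  ext i j
  fin_cases i <;> fin_cases j <;>
    simp [Matrix.mul_apply, Fin.sum_univ_two] <;>
    first
      | ring1
      | linear_combination h
      | linear_combination -h
      | linear_combination (-2 : ℝ) * h
      | linear_combination (2 : ℝ) * h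

/-- If a connected graph with real weights is properly decomposable with
respect to `K = {a,b}`, then the `2×2` principal submatrices of the principal
idempotents on rows and columns `a, b` pairwise commute. -/
theorem properly_decomposable_implies_submatrices_commute {n d : ℕ}
    (A : Matrix (Fin n) (Fin n) ℝ)
    (θ : Fin (d + 1) → ℝ) (E : Fin (d + 1) → Matrix (Fin n) (Fin n) ℝ)
    (hA : A = ∑ r, θ r • E r) (hθ : Function.Injective θ)
    (hsymm : ∀ r, (E r).IsSymm)
    (hidem : ∀ r, E r * E r = E r)
    (horth : ∀ r s, r ≠ s → E r * E s = 0)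
    (hsum : ∑ r, E r = 1)
    (hconn : ∀ u v : Fin n, ∃ k : ℕ, (A ^ k) u v ≠ 0)
    (a b : Fin n) (hab : a ≠ b)
    (hdecomp : ∃ P : Polynomial ℂ,
      (∀ i j : Fin n,
        (((i = a ∨ i = b) ∧ ¬(j = a ∨ j = b)) ∨ (¬(i = a ∨ i = b) ∧ (j = a ∨ j = b))) →
        Polynomial.aeval (A.map Complex.ofReal) P i j = 0) ∧
      Polynomial.aeval (A.map Complex.ofReal) P a b ≠ 0) :
    ∀ r s : Fin (d + 1),
      !![E r a a, E r a b; E r b a, E r b b] * !![E s a a, E s a b; E s b a, E s b b]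
        = !![E s a a, E s a b; E s b a, E s b b] * !![E r a a, E r a b; E r b a, E r b b] := by
  obtain ⟨P, hzero, hne⟩ := hdecomp
  set M : Matrix (Fin n) (Fin n) ℂ := Polynomial.aeval (A.map Complex.ofReal) P with hM
  -- E r commutes with A
  have hEA : ∀ r, A * E r = E r * A := by
    intro r
    have h1 : A * E r = θ r • E r := by
      rw [hA, Finset.sum_mul]
      rw [Finset.sum_eq_single r]
      · rw [smul_mul_assoc, hidem r]
      · intro s _ hs
        rw [smul_mul_assoc, horth s r hs, smul_zero]
      · simp
    have h2 : E r * A = θ r • E r := by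
      rw [hA, Finset.mul_sum]
      rw [Finset.sum_eq_single r]
      · rw [mul_smul_comm, hidem r]
      · intro s _ hs
        rw [mul_smul_comm, horth r s (Ne.symm hs), smul_zero]
      · simp
    rw [h1, h2]
  -- the complexified E r commutes with M
  have hEM : ∀ r, (E r).map Complex.ofReal * M = M * (E r).map Complex.ofReal := by
    intro r
    have hc : Commute ((E r).map Complex.ofReal) (A.map Complex.ofReal) := by
      have := congrArg (fun X => X.map (Complex.ofRealHom : ℝ →+* ℂ)) (hEA r)
      simp only [Matrix.map_mul] at this
      exact this.symm
    exact (commute_aeval_aux _ _ hc P).eq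
  -- key scalar relation in ℂ
  have hkey : ∀ r, M a b * ((E r a a : ℂ) - (E r b b : ℂ))
      = (M a a - M b b) * (E r a b : ℂ) := by
    intro r
    have h := congrFun (congrFun (hEM r) a) b
    have hsub : ({a, b} : Finset (Fin n)) ⊆ Finset.univ := Finset.subset_univ _
    have hL : ((E r).map Complex.ofReal * M) a b
        = (E r a a : ℂ) * M a b + (E r a b : ℂ) * M b b := by
      rw [Matrix.mul_apply]
      rw [← Finset.sum_subset hsub]
      · rw [Finset.sum_pair hab]
        simp
      · intro k _ hk
        simp only [Finset.mem_insert, Finset.mem_singleton, not_or] at hk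
        have : M k b = 0 := hzero k b (Or.inr ⟨by tauto, Or.inr rfl⟩)
        simp [this]
    have hR : (M * (E r).map Complex.ofReal) a b
        = M a a * (E r a b : ℂ) + M a b * (E r b b : ℂ) := by
      rw [Matrix.mul_apply]
      rw [← Finset.sum_subset hsub]
      · rw [Finset.sum_pair hab]
        simp
      · intro k _ hk
        simp only [Finset.mem_insert, Finset.mem_singleton, not_or] at hk
        have : M a k = 0 := hzero a k (Or.inl ⟨Or.inl rfl, by tauto⟩)
        simp [this]
    rw [hL, hR] at h
    linear_combination h
  -- real relation
  have hrel : ∀ r s : Fin (d + 1),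
      (E r a a - E r b b) * E s a b = (E s a a - E s b b) * E r a b := by
    intro r s
    have hC : M a b * (((E r a a : ℂ) - E r b b) * E s a b)
        = M a b * (((E s a a : ℂ) - E s b b) * E r a b) := by
      linear_combination (E s a b : ℂ) * hkey r - (E r a b : ℂ) * hkey s
    have := mul_left_cancel₀ hne hC
    exact_mod_cast this
  intro r s
  have hba : ∀ t : Fin (d + 1), E t b a = E t a b := fun t => (hsymm t).apply a b
  rw [hba r, hba s]
  exact comm2_aux _ _ _ _ _ _ (hrel r s)
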